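/- For all integers s ≥ 8 and t ≥ 1, the asymmetric index of the disjoint union of a complete graph on s vertices and t isolated vertices satisfies ai(K_s + tK_1) ≤ (s − 2) + (t − 1). -/

import Mathlib

/-- A simple graph is *asymmetric* if its only automorphism is the identity. -/
def SimpleGraph.IsAsymmetric {V : Type*} (G : SimpleGraph V) : Prop :=
  ∀ f : G ≃g G, ∀ v : V, f v = v

/-- The *asymmetric index* `ai(G)`: the minimum, over all asymmetric graphs `G'` on the
same vertex set, of the number of edges in which `G` and `G'` differ (edges removed plus
edges added); `⊤` (infinity) if no asymmetric graph on the vertex set exists. -/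
noncomputable def SimpleGraph.asymIndex {V : Type*} (G : SimpleGraph V) : ℕ∞ :=
  sInf {n : ℕ∞ | ∃ G' : SimpleGraph V, G'.IsAsymmetric ∧
    n = (symmDiff G.edgeSet G'.edgeSet).encard}

/-- The disjoint union `G + H` of two graphs: the edges of `G` together with the edges of
`H`, and no edges between the two parts. -/
def SimpleGraph.disjUnionGraph {V W : Type*} (G : SimpleGraph V) (H : SimpleGraph W) :
    SimpleGraph (V ⊕ W) :=
  SimpleGraph.fromRel (fun x y =>
    (∃ a b, x = Sum.inl a ∧ y = Sum.inl b ∧ G.Adj a b) ∨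
    (∃ a b, x = Sum.inr a ∧ y = Sum.inr b ∧ H.Adj a b))

def hadjN (s a b : ℕ) : Prop :=
  (a + 1 = b ∧ b ≤ s - 3) ∨ (b + 1 = a ∧ a ≤ s - 3) ∨ (a = 2 ∧ b = s - 2) ∨ (b = 2 ∧ a = s - 2)

def tadjN (t j k : ℕ) : Prop :=
  (j + 1 = k ∨ k + 1 = j) ∧ j ≤ t - 2 ∧ k ≤ t - 2

def Gmod (s t : ℕ) : SimpleGraph (Fin s ⊕ Fin t) where
  Adj x y := match x, y with
    | Sum.inl a, Sum.inl b => a ≠ b ∧ ¬ hadjN s a.val b.val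
    | Sum.inl a, Sum.inr j => a.val = s - 1 ∧ j.val = 0 ∧ 2 ≤ t
    | Sum.inr j, Sum.inl a => a.val = s - 1 ∧ j.val = 0 ∧ 2 ≤ t
    | Sum.inr j, Sum.inr k => tadjN t j.val k.val
  symm := by
    constructor
    rintro (a|j) (b|k) h
    · exact ⟨h.1.symm, fun hh => h.2 (by unfold hadjN at *; tauto)⟩
    · exact h
    · exact h
    · exact ⟨h.1.symm, h.2.2, h.2.1⟩
  loopless := by
    constructor
    rintro (a|j) h
    · exact h.1 rfl
    · rcases h.1 with h' | h' <;> omega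

lemma Gmod_ll {s t : ℕ} (a b : Fin s) :
    (Gmod s t).Adj (Sum.inl a) (Sum.inl b) ↔ a ≠ b ∧ ¬ hadjN s a.val b.val := Iff.rfl
lemma Gmod_lr {s t : ℕ} (a : Fin s) (j : Fin t) :
    (Gmod s t).Adj (Sum.inl a) (Sum.inr j) ↔ a.val = s - 1 ∧ j.val = 0 ∧ 2 ≤ t := Iff.rfl
lemma Gmod_rl {s t : ℕ} (a : Fin s) (j : Fin t) :
    (Gmod s t).Adj (Sum.inr j) (Sum.inl a) ↔ a.val = s - 1 ∧ j.val = 0 ∧ 2 ≤ t := Iff.rfl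
lemma Gmod_rr {s t : ℕ} (j k : Fin t) :
    (Gmod s t).Adj (Sum.inr j) (Sum.inr k) ↔ tadjN t j.val k.val := Iff.rfl

/-- a tail vertex has no three distinct neighbours -/
lemma tail_two {s t : ℕ} (j : Fin t) (w₁ w₂ w₃ : Fin s ⊕ Fin t)
    (h1 : (Gmod s t).Adj (Sum.inr j) w₁) (h2 : (Gmod s t).Adj (Sum.inr j) w₂)
    (h3 : (Gmod s t).Adj (Sum.inr j) w₃) : w₁ = w₂ ∨ w₁ = w₃ ∨ w₂ = w₃ := by
  rcases w₁ with a₁|k₁ <;> rcases w₂ with a₂|k₂ <;> rcases w₃ with a₃|k₃ <;>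
    simp only [Gmod_rl, Gmod_rr, tadjN] at h1 h2 h3 <;>
    simp only [Sum.inl.injEq, Sum.inr.injEq, Fin.ext_iff, reduceCtorEq, false_or, or_false] <;>
    omega

/-- every clique vertex has three distinct neighbours -/
lemma clique_three {s t : ℕ} (hs : 8 ≤ s) (a : Fin s) :
    ∃ w₁ w₂ w₃ : Fin s ⊕ Fin t, w₁ ≠ w₂ ∧ w₁ ≠ w₃ ∧ w₂ ≠ w₃ ∧
      (Gmod s t).Adj (Sum.inl a) w₁ ∧ (Gmod s t).Adj (Sum.inl a) w₂ ∧
      (Gmod s t).Adj (Sum.inl a) w₃ := by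
  have hn : a.val < s := a.isLt
  have key : ∃ x y z : ℕ, x < s ∧ y < s ∧ z < s ∧ x ≠ y ∧ x ≠ z ∧ y ≠ z ∧
      a.val ≠ x ∧ a.val ≠ y ∧ a.val ≠ z ∧
      ¬ hadjN s a.val x ∧ ¬ hadjN s a.val y ∧ ¬ hadjN s a.val z := by
    rcases Nat.lt_or_ge a.val 7 with h7 | h7
    · set n := a.val with hn'
      interval_cases n
      · exact ⟨2, 3, 4, by omega, by omega, by omega, by omega, by omega, by omega,
          by omega, by omega, by omega, by unfold hadjN; omega, by unfold hadjN; omega,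
          by unfold hadjN; omega⟩
      · exact ⟨3, 4, 5, by omega, by omega, by omega, by omega, by omega, by omega,
          by omega, by omega, by omega, by unfold hadjN; omega, by unfold hadjN; omega,
          by unfold hadjN; omega⟩
      · exact ⟨4, 5, s-1, by omega, by omega, by omega, by omega, by omega, by omega,
          by omega, by omega, by omega, by unfold hadjN; omega, by unfold hadjN; omega,
          by unfold hadjN; omega⟩
      · exact ⟨0, 1, 5, by omega, by omega, by omega, by omega, by omega, by omega,
          by omega, by omega, by omega, by unfold hadjN; omega, by unfold hadjN; omega,
          by unfold hadjN; omega⟩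
      · exact ⟨0, 1, 2, by omega, by omega, by omega, by omega, by omega, by omega,
          by omega, by omega, by omega, by unfold hadjN; omega, by unfold hadjN; omega,
          by unfold hadjN; omega⟩
      · exact ⟨0, 1, 2, by omega, by omega, by omega, by omega, by omega, by omega,
          by omega, by omega, by omega, by unfold hadjN; omega, by unfold hadjN; omega,
          by unfold hadjN; omega⟩
      · exact ⟨0, 1, 3, by omega, by omega, by omega, by omega, by omega, by omega,
          by omega, by omega, by omega, by unfold hadjN; omega, by unfold hadjN; omega,
          by unfold hadjN; omega⟩
    · exact ⟨0, 1, 3, by omega, by omega, by omega, by omega, by omega, by omega,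
        by omega, by omega, by omega, by unfold hadjN; omega, by unfold hadjN; omega,
        by unfold hadjN; omega⟩
  obtain ⟨x, y, z, hx, hy, hz, hxy, hxz, hyz, hax, hay, haz, nhx, nhy, nhz⟩ := key
  refine ⟨Sum.inl ⟨x, hx⟩, Sum.inl ⟨y, hy⟩, Sum.inl ⟨z, hz⟩, ?_, ?_, ?_, ?_, ?_, ?_⟩ <;>
    simp only [Gmod_ll, ne_eq, Sum.inl.injEq, Fin.ext_iff] <;> tauto


lemma spider_rigid {s : ℕ} (hs : 8 ≤ s) (G : ℕ → ℕ)
    (hlt : ∀ n, n < s → G n < s)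
    (hinj : ∀ m n, m < s → n < s → G m = G n → m = n)
    (hsurj : ∀ y, y < s → ∃ m, m < s ∧ G m = y)
    (hIff : ∀ m n, m < s → n < s → (hadjN s m n ↔ hadjN s (G m) (G n))) :
    ∀ n, n < s → G n = n := by
  have h1 : G (s-1) = s-1 := by
    have hnone : ∀ y, y < s → ¬ hadjN s (G (s-1)) y := by
      intro y hy h
      obtain ⟨m, hm, hGm⟩ := hsurj y hy
      rw [← hGm] at h
      have := (hIff (s-1) m (by omega) hm).mpr h
      unfold hadjN at this; omega
    have hx := hlt (s-1) (by omega)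
    by_contra hne
    rcases Nat.lt_or_ge (G (s-1)) (s-3) with h | h
    · exact hnone (G (s-1) + 1) (by omega) (by unfold hadjN; omega)
    · have : G (s-1) = s-3 ∨ G (s-1) = s-2 := by omega
      rcases this with h' | h'
      · exact hnone (s-4) (by omega) (by unfold hadjN; omega)
      · exact hnone 2 (by omega) (by unfold hadjN; omega)
  have h2 : G 2 = 2 := by
    have k1 : hadjN s (G 2) (G 1) :=
      (hIff 2 1 (by omega) (by omega)).mp (by unfold hadjN; omega)
    have k3 : hadjN s (G 2) (G 3) :=
      (hIff 2 3 (by omega) (by omega)).mp (by unfold hadjN; omega)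
    have ks : hadjN s (G 2) (G (s-2)) :=
      (hIff 2 (s-2) (by omega) (by omega)).mp (by unfold hadjN; omega)
    have d13 : G 1 ≠ G 3 := fun h => by have := hinj 1 3 (by omega) (by omega) h; omega
    have d1s : G 1 ≠ G (s-2) := fun h => by
      have := hinj 1 (s-2) (by omega) (by omega) h; omega
    have d3s : G 3 ≠ G (s-2) := fun h => by
      have := hinj 3 (s-2) (by omega) (by omega) h; omega
    unfold hadjN at k1 k3 ks; omega
  have h2s : G (s-2) = s-2 := by
    have k : hadjN s (G (s-2)) (G 2) :=
      (hIff (s-2) 2 (by omega) (by omega)).mp (by unfold hadjN; omega)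
    rw [h2] at k
    have hmem : G (s-2) = 1 ∨ G (s-2) = 3 ∨ G (s-2) = s-2 := by unfold hadjN at k; omega
    rcases hmem with h | h | h
    · obtain ⟨m, hm, hGm⟩ := hsurj 0 (by omega)
      have hadj : hadjN s (G (s-2)) (G m) := by rw [h, hGm]; unfold hadjN; omega
      have hm2 := (hIff (s-2) m (by omega) hm).mpr hadj
      have hm2' : m = 2 := by unfold hadjN at hm2; omega
      rw [hm2', h2] at hGm; omega
    · obtain ⟨m, hm, hGm⟩ := hsurj 4 (by omega)
      have hadj : hadjN s (G (s-2)) (G m) := by rw [h, hGm]; unfold hadjN; omega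
      have hm2 := (hIff (s-2) m (by omega) hm).mpr hadj
      have hm2' : m = 2 := by unfold hadjN at hm2; omega
      rw [hm2', h2] at hGm; omega
    · exact h
  have h1' : G 1 = 1 := by
    have k : hadjN s (G 1) 2 := by
      have := (hIff 1 2 (by omega) (by omega)).mp (by unfold hadjN; omega)
      rwa [h2] at this
    have hmem : G 1 = 1 ∨ G 1 = 3 ∨ G 1 = s-2 := by unfold hadjN at k; omega
    have hne : G 1 ≠ s-2 := by
      intro h; have := hinj 1 (s-2) (by omega) (by omega) (by rw [h, h2s]); omega
    rcases hmem with h | h | h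
    · exact h
    · exfalso
      have k0 : hadjN s (G 1) (G 0) :=
        (hIff 1 0 (by omega) (by omega)).mp (by unfold hadjN; omega)
      rw [h] at k0
      have h04 : G 0 = 2 ∨ G 0 = 4 := by unfold hadjN at k0; omega
      have hne2 : G 0 ≠ 2 := by
        intro hh; have := hinj 0 2 (by omega) (by omega) (by rw [hh, h2]); omega
      have h04' : G 0 = 4 := by omega
      obtain ⟨m, hm, hGm⟩ := hsurj 5 (by omega)
      have hadj : hadjN s (G 0) (G m) := by rw [h04', hGm]; unfold hadjN; omega
      have hm2 := (hIff 0 m (by omega) hm).mpr hadj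
      have hm2' : m = 1 := by unfold hadjN at hm2; omega
      rw [hm2'] at hGm; omega
    · exact absurd h hne
  have h3' : G 3 = 3 := by
    have k : hadjN s (G 3) 2 := by
      have := (hIff 3 2 (by omega) (by omega)).mp (by unfold hadjN; omega)
      rwa [h2] at this
    have hmem : G 3 = 1 ∨ G 3 = 3 ∨ G 3 = s-2 := by unfold hadjN at k; omega
    have hne : G 3 ≠ s-2 := by
      intro h; have := hinj 3 (s-2) (by omega) (by omega) (by rw [h, h2s]); omega
    have hne1 : G 3 ≠ 1 := by
      intro h; have := hinj 3 1 (by omega) (by omega) (by rw [h, h1']); omega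
    omega
  have h0 : G 0 = 0 := by
    have k : hadjN s 1 (G 0) := by
      have := (hIff 1 0 (by omega) (by omega)).mp (by unfold hadjN; omega)
      rwa [h1'] at this
    have hmem : G 0 = 0 ∨ G 0 = 2 := by unfold hadjN at k; omega
    have hne2 : G 0 ≠ 2 := by
      intro hh; have := hinj 0 2 (by omega) (by omega) (by rw [hh, h2]); omega
    omega
  have hpath : ∀ k, k ≤ s - 3 → G k = k := by
    intro k
    induction k using Nat.strong_induction_on with
    | _ k ih =>
      intro hk
      rcases Nat.lt_or_ge k 4 with hk4 | hk4
      · interval_cases k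
        · exact h0
        · exact h1'
        · exact h2
        · exact h3'
      · have e1 : G (k-1) = k-1 := ih (k-1) (by omega) (by omega)
        have e2 : G (k-2) = k-2 := ih (k-2) (by omega) (by omega)
        have kadj : hadjN s (G (k-1)) (G k) :=
          (hIff (k-1) k (by omega) (by omega)).mp (by unfold hadjN; omega)
        rw [e1] at kadj
        have hmem : G k = k-2 ∨ G k = k := by unfold hadjN at kadj; omega
        have hne : G k ≠ k-2 := by
          intro hh; have := hinj k (k-2) (by omega) (by omega) (by rw [hh, e2]); omega
        omega
  intro n hn
  rcases Nat.lt_or_ge n (s-2) with h | h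
  · exact hpath n (by omega)
  · have : n = s-2 ∨ n = s-1 := by omega
    rcases this with h' | h' <;> subst h'
    · exact h2s
    · exact h1

lemma tail_rigid {t : ℕ} (htpos : 1 ≤ t) (T : ℕ → ℕ)
    (hlt : ∀ n, n < t → T n < t)
    (hinj : ∀ m n, m < t → n < t → T m = T n → m = n)
    (hIff : ∀ m n, m < t → n < t → (tadjN t m n ↔ tadjN t (T m) (T n)))
    (hT0 : 2 ≤ t → T 0 = 0) :
    ∀ n, n < t → T n = n := by
  have hfix : ∀ n, n ≤ t - 2 → T n = n := by
    intro n
    induction n using Nat.strong_induction_on with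
    | _ n ih =>
      intro hn
      rcases Nat.eq_zero_or_pos n with h0 | h0
      · subst h0
        rcases Nat.lt_or_ge t 2 with h | h
        · have := hlt 0 (by omega); omega
        · exact hT0 h
      · have e1 : T (n-1) = n-1 := ih (n-1) (by omega) (by omega)
        have kadj : tadjN t (T (n-1)) (T n) :=
          (hIff (n-1) n (by omega) (by omega)).mp (by unfold tadjN; omega)
        rw [e1] at kadj
        have hmem : T n = n ∨ T n = n - 2 := by unfold tadjN at kadj; omega
        rcases hmem with h | h
        · exact h
        · exfalso
          rcases Nat.lt_or_ge n 2 with h2 | h2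
          · have := hinj n 0 (by omega) (by omega) (by rw [hT0 (by omega)]; omega)
            omega
          · have e2 : T (n-2) = n-2 := ih (n-2) (by omega) (by omega)
            have := hinj n (n-2) (by omega) (by omega) (by rw [h, e2])
            omega
  intro n hn
  rcases Nat.lt_or_ge n (t-1) with h | h
  · exact hfix n (by omega)
  · have hn1 : n = t - 1 := by omega
    subst hn1
    have hx := hlt (t-1) (by omega)
    rcases Nat.lt_or_ge (T (t-1)) (t-1) with h' | h'
    · have := hinj (T (t-1)) (t-1) (by omega) (by omega) (hfix _ (by omega))
      omega
    · omega

lemma Gmod_asym {s t : ℕ} (hs : 8 ≤ s) (ht : 1 ≤ t) : (Gmod s t).IsAsymmetric := by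
  intro f
  have finj : Function.Injective f := f.toEquiv.injective
  have hmap : ∀ a : Fin s, ∃ b : Fin s, f (Sum.inl a) = Sum.inl b := by
    intro a
    rcases hx : f (Sum.inl a) with b | j
    · exact ⟨b, rfl⟩
    · exfalso
      obtain ⟨w₁, w₂, w₃, h12, h13, h23, a1, a2, a3⟩ := clique_three (t := t) hs a
      have A1 : (Gmod s t).Adj (Sum.inr j) (f w₁) := by
        rw [← hx]; exact f.map_adj_iff.mpr a1
      have A2 : (Gmod s t).Adj (Sum.inr j) (f w₂) := by
        rw [← hx]; exact f.map_adj_iff.mpr a2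
      have A3 : (Gmod s t).Adj (Sum.inr j) (f w₃) := by
        rw [← hx]; exact f.map_adj_iff.mpr a3
      rcases tail_two j _ _ _ A1 A2 A3 with h | h | h
      · exact h12 (finj h)
      · exact h13 (finj h)
      · exact h23 (finj h)
  choose g hg using hmap
  have ginj : Function.Injective g := by
    intro a b hab
    have : f (Sum.inl a) = f (Sum.inl b) := by rw [hg, hg, hab]
    exact Sum.inl_injective (finj this)
  have gsurj : Function.Surjective g := Finite.surjective_of_injective ginj
  have hspos : 0 < s := by omega
  let v : ℕ → Fin s := fun n => ⟨n % s, Nat.mod_lt _ hspos⟩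
  have hvval : ∀ n, n < s → (v n).val = n := fun n h => Nat.mod_eq_of_lt h
  have hvv : ∀ a : Fin s, v a.val = a := by
    intro a; apply Fin.ext; exact hvval _ a.isLt
  have hGfix : ∀ n, n < s → (g (v n)).val = n := by
    apply spider_rigid hs (fun n => (g (v n)).val)
    · intro n _; exact (g (v n)).isLt
    · intro m n hm hn hmn
      have : v m = v n := ginj (Fin.ext hmn)
      have := congrArg Fin.val this
      rwa [hvval m hm, hvval n hn] at this
    · intro y hy
      obtain ⟨a, ha⟩ := gsurj ⟨y, hy⟩
      refine ⟨a.val, a.isLt, ?_⟩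
      rw [hvv a, ha]
    · intro m n hm hn
      have key := f.map_adj_iff (v := Sum.inl (v m)) (w := Sum.inl (v n))
      rw [hg, hg, Gmod_ll, Gmod_ll, hvval m hm, hvval n hn] at key
      have hvne : m ≠ n → v m ≠ v n := by
        intro hmn h
        have := congrArg Fin.val h
        rw [hvval m hm, hvval n hn] at this; exact hmn this
      have hirr : ∀ x : ℕ, ¬ hadjN s x x := by intro x; unfold hadjN; omega
      constructor
      · intro h
        have hmn : m ≠ n := by intro hh; subst hh; exact hirr m h
        have gne : g (v m) ≠ g (v n) := fun hh => hvne hmn (ginj hh)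
        by_contra hcon
        exact (key.mp ⟨gne, hcon⟩).2 h
      · intro h
        have vne : v m ≠ v n := by
          intro hh
          rw [hh] at h; exact hirr _ h
        by_contra hcon
        exact (key.mpr ⟨vne, hcon⟩).2 h
  have hfixl : ∀ a : Fin s, f (Sum.inl a) = Sum.inl a := by
    intro a
    rw [hg a]
    congr 1
    have := hGfix a.val a.isLt
    rw [hvv a] at this
    exact Fin.ext this
  -- tail part
  have hmapr : ∀ j : Fin t, ∃ k : Fin t, f (Sum.inr j) = Sum.inr k := by
    intro j
    rcases hx : f (Sum.inr j) with a | k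
    · exfalso
      have : f (Sum.inl a) = Sum.inl a := hfixl a
      have : Sum.inr j = Sum.inl a := finj (by rw [hx, this])
      exact Sum.inr_ne_inl this
    · exact ⟨k, rfl⟩
  choose τ hτ using hmapr
  have τinj : Function.Injective τ := by
    intro a b hab
    have : f (Sum.inr a) = f (Sum.inr b) := by rw [hτ, hτ, hab]
    exact Sum.inr_injective (finj this)
  have htpos : 0 < t := ht
  let w : ℕ → Fin t := fun n => ⟨n % t, Nat.mod_lt _ htpos⟩
  have hwval : ∀ n, n < t → (w n).val = n := fun n h => Nat.mod_eq_of_lt h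
  have hww : ∀ a : Fin t, w a.val = a := by
    intro a; apply Fin.ext; exact hwval _ a.isLt
  have hTfix : ∀ n, n < t → (τ (w n)).val = n := by
    apply tail_rigid ht (fun n => (τ (w n)).val)
    · intro n _; exact (τ (w n)).isLt
    · intro m n hm hn hmn
      have : w m = w n := τinj (Fin.ext hmn)
      have := congrArg Fin.val this
      rwa [hwval m hm, hwval n hn] at this
    · intro m n hm hn
      have key := f.map_adj_iff (v := Sum.inr (w m)) (w := Sum.inr (w n))
      rw [hτ, hτ, Gmod_rr, Gmod_rr, hwval m hm, hwval n hn] at key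
      exact key.symm
    · intro h2t
      have key := f.map_adj_iff (v := Sum.inl (v (s-1))) (w := Sum.inr (w 0))
      rw [hfixl, hτ, Gmod_lr, Gmod_lr] at key
      have := (key.mpr ⟨hvval (s-1) (by omega), hwval 0 (by omega), h2t⟩).2.1
      exact this
  have hfixr : ∀ j : Fin t, f (Sum.inr j) = Sum.inr j := by
    intro j
    rw [hτ j]
    congr 1
    have := hTfix j.val j.isLt
    rw [hww j] at this
    exact Fin.ext this
  rintro (a | j)
  · exact hfixl a
  · exact hfixr j

lemma split_adj {s t : ℕ} (x y : Fin s ⊕ Fin t) :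
    ((SimpleGraph.completeGraph (Fin s)).disjUnionGraph (⊥ : SimpleGraph (Fin t))).Adj x y ↔
      ∃ a b : Fin s, x = Sum.inl a ∧ y = Sum.inl b ∧ a ≠ b := by
  unfold SimpleGraph.disjUnionGraph
  rw [SimpleGraph.fromRel_adj]
  constructor
  · rintro ⟨hne, h | h⟩
    · rcases h with ⟨a, b, rfl, rfl, hab⟩ | ⟨a, b, rfl, rfl, hab⟩
      · exact ⟨a, b, rfl, rfl, hab⟩
      · exact absurd hab (by simp)
    · rcases h with ⟨a, b, rfl, rfl, hab⟩ | ⟨a, b, rfl, rfl, hab⟩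
      · exact ⟨b, a, rfl, rfl, hab.symm⟩
      · exact absurd hab (by simp)
  · rintro ⟨a, b, rfl, rfl, hab⟩
    exact ⟨fun h => hab (Sum.inl_injective h), Or.inl (Or.inl ⟨a, b, rfl, rfl, hab⟩)⟩

def cF (s : ℕ) (hs : 0 < s) (n : ℕ) : Fin s := ⟨n % s, Nat.mod_lt _ hs⟩

lemma cF_eq {s : ℕ} (hs : 0 < s) (n : ℕ) (a : Fin s) (h : n = a.val) : cF s hs n = a := by
  subst h; exact Fin.ext (Nat.mod_eq_of_lt a.isLt)

def FF (s t : ℕ) (hs : 0 < s) (ht : 0 < t) : Fin (s-2) ⊕ Fin (t-1) → Sym2 (Fin s ⊕ Fin t)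
  | Sum.inl i => if i.val < s - 3 then s(Sum.inl (cF s hs i.val), Sum.inl (cF s hs (i.val+1)))
      else s(Sum.inl (cF s hs 2), Sum.inl (cF s hs (s-2)))
  | Sum.inr j => if j.val = 0 then s(Sum.inl (cF s hs (s-1)), Sum.inr (cF t ht 0))
      else s(Sum.inr (cF t ht (j.val-1)), Sum.inr (cF t ht j.val))

/-- For `s ≥ 8` and `t ≥ 1`, the split graph `K_s + tK_1` (a complete graph on `s`
vertices together with `t` isolated vertices) satisfies
`ai(K_s + tK_1) ≤ (s - 2) + (t - 1)`. -/
theorem asymIndex_split_le {s t : ℕ} (hs : 8 ≤ s) (ht : 1 ≤ t) :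
    ((SimpleGraph.completeGraph (Fin s)).disjUnionGraph (⊥ : SimpleGraph (Fin t))).asymIndex ≤
      (((s - 2) + (t - 1) : ℕ) : ℕ∞) := by
  have hasym := Gmod_asym hs ht
  refine le_trans (sInf_le ⟨Gmod s t, hasym, rfl⟩) ?_
  have hs' : 0 < s := by omega
  have ht' : 0 < t := ht
  set G := (SimpleGraph.completeGraph (Fin s)).disjUnionGraph (⊥ : SimpleGraph (Fin t)) with hG
  have hsub : symmDiff G.edgeSet (Gmod s t).edgeSet ⊆ Set.range (FF s t hs' ht') := by
    intro e
    induction e using Sym2.ind with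
    | _ x y =>
      intro he
      rw [Set.mem_symmDiff] at he
      simp only [SimpleGraph.mem_edgeSet] at he
      rcases x with a | j <;> rcases y with b | k
      · -- inl inl
        rcases he with ⟨h1, h2⟩ | ⟨h1, h2⟩
        · obtain ⟨a', b', ha, hb, hne⟩ := (split_adj _ _).mp h1
          have ha' : a = a' := Sum.inl_injective ha
          have hb' : b = b' := Sum.inl_injective hb
          subst ha'; subst hb'
          have hadj : hadjN s a.val b.val := by
            by_contra hcon
            exact h2 ((Gmod_ll a b).mpr ⟨hne, hcon⟩)
          unfold hadjN at hadj
          rcases hadj with ⟨h, h'⟩ | ⟨h, h'⟩ | ⟨h, h'⟩ | ⟨h, h'⟩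
          · refine ⟨Sum.inl ⟨a.val, by omega⟩, ?_⟩
            simp only [FF]
            rw [if_pos (show a.val < s - 3 by omega)]
            rw [cF_eq hs' a.val a rfl, cF_eq hs' (a.val+1) b h]
          · refine ⟨Sum.inl ⟨b.val, by omega⟩, ?_⟩
            simp only [FF]
            rw [if_pos (show b.val < s - 3 by omega)]
            rw [cF_eq hs' b.val b rfl, cF_eq hs' (b.val+1) a h, Sym2.eq_swap]
          · refine ⟨Sum.inl ⟨s-3, by omega⟩, ?_⟩
            simp only [FF]
            rw [if_neg (show ¬ (s-3 < s - 3) by omega)]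
            rw [cF_eq hs' 2 a h.symm, cF_eq hs' (s-2) b h'.symm]
          · refine ⟨Sum.inl ⟨s-3, by omega⟩, ?_⟩
            simp only [FF]
            rw [if_neg (show ¬ (s-3 < s - 3) by omega)]
            rw [cF_eq hs' 2 b h.symm, cF_eq hs' (s-2) a h'.symm, Sym2.eq_swap]
        · obtain ⟨hne, -⟩ := (Gmod_ll a b).mp h1
          exact absurd ((split_adj _ _).mpr ⟨a, b, rfl, rfl,
            fun hh => hne (by rw [hh])⟩) h2
      · -- inl inr
        rcases he with ⟨h1, h2⟩ | ⟨h1, h2⟩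
        · obtain ⟨a', b', -, hb, -⟩ := (split_adj _ _).mp h1
          exact absurd hb (by simp)
        · obtain ⟨ha, hk, h2t⟩ := (Gmod_lr a k).mp h1
          refine ⟨Sum.inr ⟨0, by omega⟩, ?_⟩
          simp only [FF]
          rw [if_pos trivial]
          rw [cF_eq hs' (s-1) a ha.symm, cF_eq ht' 0 k hk.symm]
      · -- inr inl
        rcases he with ⟨h1, h2⟩ | ⟨h1, h2⟩
        · obtain ⟨a', b', ha, -, -⟩ := (split_adj _ _).mp h1
          exact absurd ha (by simp)
        · obtain ⟨hb, hj, h2t⟩ := (Gmod_rl b j).mp h1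
          refine ⟨Sum.inr ⟨0, by omega⟩, ?_⟩
          simp only [FF]
          rw [if_pos trivial]
          rw [cF_eq hs' (s-1) b hb.symm, cF_eq ht' 0 j hj.symm, Sym2.eq_swap]
      · -- inr inr
        rcases he with ⟨h1, h2⟩ | ⟨h1, h2⟩
        · obtain ⟨a', b', ha, -, -⟩ := (split_adj _ _).mp h1
          exact absurd ha (by simp)
        · obtain ⟨hd, hj, hk⟩ := (Gmod_rr j k).mp h1
          rcases hd with h | h
          · refine ⟨Sum.inr ⟨k.val, by omega⟩, ?_⟩
            simp only [FF]
            rw [if_neg (show ¬ (k.val = 0) by omega)]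
            rw [cF_eq ht' (k.val-1) j (by omega), cF_eq ht' k.val k rfl]
          · refine ⟨Sum.inr ⟨j.val, by omega⟩, ?_⟩
            simp only [FF]
            rw [if_neg (show ¬ (j.val = 0) by omega)]
            rw [cF_eq ht' (j.val-1) k (by omega), cF_eq ht' j.val j rfl, Sym2.eq_swap]
  calc (symmDiff G.edgeSet (Gmod s t).edgeSet).encard
      ≤ (Set.range (FF s t hs' ht')).encard := Set.encard_mono hsub
    _ ≤ (Set.univ : Set (Fin (s-2) ⊕ Fin (t-1))).encard := by
        rw [← Set.image_univ]; exact Set.encard_image_le _ _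
    _ = (((s - 2) + (t - 1) : ℕ) : ℕ∞) := by
        rw [Set.encard_univ]
        simp [ENat.card_eq_coe_fintype_card]
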